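/- Let G be a group and N a normal subgroup of G, with quotient map π : G → Q = G/N. Conjugation in G induces a well-defined action of Q on the center Z(N) (this is well defined because N acts trivially on Z(N) by conjugation). Then the group of automorphisms of G that restrict to the identity on N and induce the identity on Q is isomorphic to the group Z¹(Q, Z(N)) of crossed homomorphisms, i.e. functions f : Q → Z(N) satisfying f(qq') = f(q)·(q • f(q')), with the isomorphism μ given by μ(f)(g) = f(π(g))·g for g ∈ G. (Kernel part of the Wells–Buckley exact sequence, Theorem 2.1.) -/

import Mathlib

/-- The automorphism `g ↦ f(π g) * g` associated to a crossed homomorphism `f`. -/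
private def wbAut {G : Type*} [Group G] (N : Subgroup G) [N.Normal]
    (f : G ⧸ N → G)
    (hN : ∀ q : G ⧸ N, f q ∈ N)
    (hcoc : ∀ g g' : G, f ((g * g' : G) : G ⧸ N) =
      f (g : G ⧸ N) * (g * f (g' : G ⧸ N) * g⁻¹)) :
    MulAut G where
  toFun g := f (g : G ⧸ N) * g
  invFun g := (f (g : G ⧸ N))⁻¹ * g
  left_inv g := by
    have h : ((f (g : G ⧸ N) * g : G) : G ⧸ N) = (g : G ⧸ N) := by
      rw [QuotientGroup.mk_mul, (QuotientGroup.eq_one_iff _).mpr (hN _), one_mul]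
    dsimp only
    rw [h]
    group
  right_inv g := by
    have h : (((f (g : G ⧸ N))⁻¹ * g : G) : G ⧸ N) = (g : G ⧸ N) := by
      rw [QuotientGroup.mk_mul, QuotientGroup.mk_inv,
        (QuotientGroup.eq_one_iff _).mpr (hN _), inv_one, one_mul]
    dsimp only
    rw [h]
    group
  map_mul' g g' := by
    try simp only
    rw [hcoc]
    group

/-- **Kernel part of the Wells–Buckley exact sequence (Theorem 2.1).**
For a group `G` with normal subgroup `N` and quotient `Q = G ⧸ N`, the group `K` of
automorphisms of `G` restricting to the identity on `N` and inducing the identity on `Q`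
is isomorphic to the group `Z¹(Q, Z(N))` of crossed homomorphisms `f : Q → Z(N)`
(functions with values in the center of `N`, satisfying the cocycle condition
`f(qq') = f(q) · (q • f(q'))`, where `Q` acts on `Z(N)` by conjugation by lifts),
the isomorphism `μ` being given by `μ(f)(g) = f(π(g)) · g`.  Here the crossed
homomorphisms are realized as a subgroup `Z1` of the group of functions
`G ⧸ N → G` under pointwise multiplication. -/
theorem wells_buckley_kernel {G : Type*} [Group G] (N : Subgroup G) [N.Normal]
    (Z1 : Subgroup (G ⧸ N → G))
    (hZ1 : ∀ f : G ⧸ N → G, f ∈ Z1 ↔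
      (∀ q : G ⧸ N, f q ∈ N) ∧
      (∀ q : G ⧸ N, ∀ n ∈ N, f q * n = n * f q) ∧
      (∀ g g' : G, f ((g * g' : G) : G ⧸ N) = f (g : G ⧸ N) * (g * f (g' : G ⧸ N) * g⁻¹)))
    (K : Subgroup (MulAut G))
    (hK : ∀ φ : MulAut G, φ ∈ K ↔
      (∀ n ∈ N, φ n = n) ∧
      (∀ g : G, ((φ g : G) : G ⧸ N) = ((g : G) : G ⧸ N))) :
    ∃ e : Z1 ≃* K,
      ∀ (f : Z1) (g : G), (((e f : MulAut G)) g = (f : G ⧸ N → G) (g : G ⧸ N) * g) := by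
  classical
  have hN : ∀ f : Z1, ∀ q : G ⧸ N, (f : G ⧸ N → G) q ∈ N := fun f => ((hZ1 f).1 f.2).1
  have hcoc : ∀ f : Z1, ∀ g g' : G, (f : G ⧸ N → G) ((g * g' : G) : G ⧸ N) =
      (f : G ⧸ N → G) (g : G ⧸ N) * (g * (f : G ⧸ N → G) (g' : G ⧸ N) * g⁻¹) :=
    fun f => ((hZ1 f).1 f.2).2.2
  -- f(1) = 1 for crossed homomorphisms
  have hone : ∀ f : Z1, (f : G ⧸ N → G) ((1 : G) : G ⧸ N) = 1 := by
    intro f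
    have h := hcoc f 1 1
    simp only [one_mul, mul_one, inv_one] at h
    exact left_eq_mul.mp h
  -- each wbAut lies in K
  have hinK : ∀ f : Z1, wbAut N (f : G ⧸ N → G) (hN f) (hcoc f) ∈ K := by
    intro f
    rw [hK]
    constructor
    · intro n hn
      show (f : G ⧸ N → G) (n : G ⧸ N) * n = n
      have : ((n : G) : G ⧸ N) = ((1 : G) : G ⧸ N) := by
        rw [(QuotientGroup.eq_one_iff _).mpr hn, QuotientGroup.mk_one]
      rw [this, hone, one_mul]
    · intro g
      show ((((f : G ⧸ N → G) (g : G ⧸ N) * g : G)) : G ⧸ N) = (g : G ⧸ N)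
      rw [QuotientGroup.mk_mul, (QuotientGroup.eq_one_iff _).mpr (hN f _), one_mul]
  -- the homomorphism Z1 →* K
  let Φ : Z1 →* K := MonoidHom.mk'
    (fun f => ⟨wbAut N (f : G ⧸ N → G) (hN f) (hcoc f), hinK f⟩)
    (by
      intro f f'
      ext g
      show (f * f' : Z1).1 (g : G ⧸ N) * g =
        (f : G ⧸ N → G) (((f' : G ⧸ N → G) (g : G ⧸ N) * g : G) : G ⧸ N) *
          ((f' : G ⧸ N → G) (g : G ⧸ N) * g)
      have h : (((f' : G ⧸ N → G) (g : G ⧸ N) * g : G) : G ⧸ N) = (g : G ⧸ N) := by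
        rw [QuotientGroup.mk_mul, (QuotientGroup.eq_one_iff _).mpr (hN f' _), one_mul]
      rw [h]
      show ((f : G ⧸ N → G) * (f' : G ⧸ N → G)) (g : G ⧸ N) * g = _
      simp [Pi.mul_apply, mul_assoc])
  have hΦ : Function.Bijective Φ := by
    constructor
    · intro f f' h
      ext q
      obtain ⟨g, rfl⟩ := QuotientGroup.mk_surjective q
      have := congrArg (fun ψ : K => (ψ : MulAut G) g) h
      try simp only at this
      have h2 : (f : G ⧸ N → G) (g : G ⧸ N) * g = (f' : G ⧸ N → G) (g : G ⧸ N) * g := this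
      exact mul_right_cancel h2
    · rintro ⟨φ, hφ⟩
      obtain ⟨hφN, hφQ⟩ := (hK φ).1 hφ
      -- define the crossed homomorphism
      set f : G ⧸ N → G := fun q => φ q.out * q.out⁻¹ with hf
      have hfmk : ∀ g : G, f (g : G ⧸ N) = φ g * g⁻¹ := by
        intro g
        have hx : (((g : G ⧸ N).out : G) : G ⧸ N) = (g : G ⧸ N) := QuotientGroup.out_eq' _
        obtain ⟨m, hm, hgm⟩ : ∃ m ∈ N, (g : G ⧸ N).out = g * m := by
          refine ⟨g⁻¹ * (g : G ⧸ N).out, ?_, by group⟩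
          rw [← QuotientGroup.eq_one_iff (g⁻¹ * (QuotientGroup.mk (s := N) g).out), QuotientGroup.mk_mul, QuotientGroup.mk_inv, hx]
          simp
        rw [hf]
        simp only
        rw [hgm, map_mul, hφN m hm]
        group
      have hfN : ∀ q : G ⧸ N, f q ∈ N := by
        intro q
        obtain ⟨g, rfl⟩ := QuotientGroup.mk_surjective q
        rw [hfmk, ← QuotientGroup.eq_one_iff (φ g * g⁻¹), QuotientGroup.mk_mul, QuotientGroup.mk_inv,
          hφQ]
        simp
      have hfZ : f ∈ Z1 := by
        rw [hZ1]
        refine ⟨hfN, ?_, ?_⟩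
        · intro q n hn
          obtain ⟨g, rfl⟩ := QuotientGroup.mk_surjective q
          rw [hfmk]
          have hm : g⁻¹ * n * g ∈ N := Subgroup.Normal.conj_mem' ‹N.Normal› n hn g
          have key2 : (φ g)⁻¹ * n * φ g = g⁻¹ * n * g := by
            have hk := hφN _ hm
            rwa [map_mul, map_mul, map_inv, hφN n hn] at hk
          calc φ g * g⁻¹ * n = φ g * (g⁻¹ * n * g) * g⁻¹ := by group
            _ = φ g * ((φ g)⁻¹ * n * φ g) * g⁻¹ := by rw [key2]
            _ = n * (φ g * g⁻¹) := by group
        · intro g g'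
          rw [hfmk, hfmk, hfmk, map_mul]
          group
      refine ⟨⟨f, hfZ⟩, ?_⟩
      ext g
      show f (g : G ⧸ N) * g = φ g
      rw [hfmk]
      group
  refine ⟨MulEquiv.ofBijective Φ hΦ, ?_⟩
  intro f g
  rfl
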